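/- Let n ≥ 4, α ∈ {0,1}, and G = 2^α.S_n with projection π : G → S_n. Let x ∈ G be such that π(x) is an odd permutation. Then x is an involution if and only if π(x) is an l-fold transposition with l ≡ 1 (mod 4) in the case α = 0 (the cover 2^+.S_n), respectively with l ≡ 3 (mod 4) in the case α = 1 (the cover 2^−.S_n). -/

import Mathlib

/-! Double covers `2^α.S_n` of the symmetric groups, via the presentation with
generators `z, t_1, …, t_{n-1}` and relations `z² = 1`, `t_j² = z^α`,
`(t_j t_{j+1})³ = z^α`, `[z, t_j] = 1`, and `t_j t_k = z t_k t_j` for `|j - k| > 1`.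
Here `α = 0` gives `2^+.S_n` and `α = 1` gives `2^-.S_n`. -/

namespace DoubleCover

/-- Generators: `Sum.inl ()` is `z`; `Sum.inr j` is `t_{j+1}` for `j : Fin (n - 1)`. -/
abbrev Gen (n : ℕ) := Unit ⊕ Fin (n - 1)

/-- The word `z` in the free group on the generators. -/
def zw (n : ℕ) : FreeGroup (Gen n) := FreeGroup.of (Sum.inl ())

/-- The word `t_{j+1}` in the free group on the generators. -/
def tw (n : ℕ) (j : Fin (n - 1)) : FreeGroup (Gen n) := FreeGroup.of (Sum.inr j)

/-- The relations of the presentation of `2^α.S_n`. -/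
def rels (n α : ℕ) : Set (FreeGroup (Gen n)) :=
  {r | r = zw n ^ 2
    ∨ (∃ j, r = tw n j ^ 2 * (zw n ^ α)⁻¹)
    ∨ (∃ j k : Fin (n - 1), (j : ℕ) + 1 = (k : ℕ) ∧
        r = (tw n j * tw n k) ^ 3 * (zw n ^ α)⁻¹)
    ∨ (∃ j, r = zw n * tw n j * (zw n)⁻¹ * (tw n j)⁻¹)
    ∨ (∃ j k : Fin (n - 1), 1 < Nat.dist (j : ℕ) (k : ℕ) ∧
        r = tw n j * tw n k * (zw n * tw n k * tw n j)⁻¹)}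

/-- The double cover `2^α.S_n` of the symmetric group `S_n`. -/
abbrev Cover (n α : ℕ) := PresentedGroup (rels n α)

/-- The central element `z` of `2^α.S_n`. -/
def z (n α : ℕ) : Cover n α := PresentedGroup.of (Sum.inl ())

/-- The generator `t_{j+1}` of `2^α.S_n`, lifting the transposition `(j+1, j+2)`. -/
def t (n α : ℕ) (j : Fin (n - 1)) : Cover n α := PresentedGroup.of (Sum.inr j)

end DoubleCover

/-- A subgroup is an elementary abelian 2-subgroup iff every element squares to `1`
(this forces it to be abelian). -/
def IsElemAbelianTwo {G : Type*} [Group G] (E : Subgroup G) : Prop :=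
  ∀ x ∈ E, x ^ 2 = 1

section DCAux
open DoubleCover

variable {n α : ℕ}

private lemma DC_mk_rel {r : FreeGroup (Gen n)} (hr : r ∈ rels n α) :
    PresentedGroup.mk (rels n α) r = 1 :=
  (QuotientGroup.eq_one_iff _).mpr (Subgroup.subset_normalClosure hr)

private lemma DC_z_def : z n α = PresentedGroup.mk (rels n α) (zw n) := rfl
private lemma DC_t_def (j : Fin (n-1)) : t n α j = PresentedGroup.mk (rels n α) (tw n j) := rfl

private lemma DC_z_sq : z n α ^ 2 = 1 := by
  have h := DC_mk_rel (n := n) (α := α) (Or.inl rfl)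
  rwa [map_pow, ← DC_z_def] at h

private lemma DC_t_sq (j : Fin (n-1)) : t n α j ^ 2 = z n α ^ α := by
  have h := DC_mk_rel (n := n) (α := α) (Or.inr (Or.inl ⟨j, rfl⟩))
  rwa [map_mul, map_inv, map_pow, map_pow, ← DC_z_def, ← DC_t_def, mul_inv_eq_one] at h

private lemma DC_zt_comm (j : Fin (n-1)) : z n α * t n α j = t n α j * z n α := by
  have h := DC_mk_rel (n := n) (α := α) (Or.inr (Or.inr (Or.inr (Or.inl ⟨j, rfl⟩))))
  rwa [map_mul, map_mul, map_mul, map_inv, map_inv, ← DC_z_def, ← DC_t_def,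
    mul_inv_eq_one, mul_inv_eq_iff_eq_mul] at h

private lemma DC_far (j k : Fin (n-1)) (h : 1 < Nat.dist (j:ℕ) (k:ℕ)) :
    t n α j * t n α k = z n α * (t n α k * t n α j) := by
  have h5 := DC_mk_rel (n := n) (α := α) (Or.inr (Or.inr (Or.inr (Or.inr ⟨j, k, h, rfl⟩))))
  rw [map_mul, map_inv, map_mul, map_mul, map_mul, ← DC_z_def, ← DC_t_def, ← DC_t_def,
    mul_inv_eq_one] at h5
  rw [h5, mul_assoc]

private lemma DC_z_commute (x : Cover n α) : Commute (z n α) x := by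
  have hx : x ∈ Subgroup.centralizer {z n α} := by
    refine PresentedGroup.generated_by _ _ (fun j => Subgroup.mem_centralizer_iff.mpr ?_) x
    intro h hh
    rw [Set.mem_singleton_iff] at hh
    subst hh
    cases j with
    | inl u => rfl
    | inr j => exact DC_zt_comm j
  exact Subgroup.mem_centralizer_iff.mp hx _ rfl

/-- The product of the lifted transpositions indexed by a list. -/
private def DCW (n α : ℕ) (s : List (Fin (n-1))) : Cover n α := (s.map (t n α)).prod

private lemma DCW_cons (j : Fin (n-1)) (s : List (Fin (n-1))) :
    DCW n α (j :: s) = t n α j * DCW n α s := by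
  simp [DCW]

private lemma DCW_mul_t (s : List (Fin (n-1))) (j : Fin (n-1))
    (hfar : ∀ k ∈ s, 1 < Nat.dist (j:ℕ) (k:ℕ)) :
    DCW n α s * t n α j = z n α ^ s.length * (t n α j * DCW n α s) := by
  induction s with
  | nil => simp [DCW]
  | cons k s ih =>
    have hk : 1 < Nat.dist (k:ℕ) (j:ℕ) := by
      rw [Nat.dist_comm]; exact hfar k List.mem_cons_self
    have ih' := ih (fun a ha => hfar a (List.mem_cons_of_mem _ ha))
    rw [DCW_cons, List.length_cons]
    set W := DCW n α s
    set L := s.length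
    calc (t n α k * W) * t n α j = t n α k * (W * t n α j) := by rw [mul_assoc]
      _ = t n α k * (z n α ^ L * (t n α j * W)) := by rw [ih']
      _ = (t n α k * z n α ^ L) * (t n α j * W) := by rw [mul_assoc]
      _ = (z n α ^ L * t n α k) * (t n α j * W) := by
          rw [((DC_z_commute (t n α k)).pow_left L).eq]
      _ = z n α ^ L * ((t n α k * t n α j) * W) := by simp only [mul_assoc]
      _ = z n α ^ L * ((z n α * (t n α j * t n α k)) * W) := by rw [DC_far k j hk]
      _ = (z n α ^ L * z n α) * (t n α j * (t n α k * W)) := by simp only [mul_assoc]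
      _ = z n α ^ (L + 1) * (t n α j * (t n α k * W)) := by rw [pow_succ]

private lemma DCW_sq (s : List (Fin (n-1)))
    (hp : s.Pairwise (fun j k : Fin (n-1) => 1 < Nat.dist (j:ℕ) (k:ℕ))) :
    DCW n α s ^ 2 = z n α ^ (α * s.length + (s.length).choose 2) := by
  induction s with
  | nil => simp [DCW]
  | cons j s ih =>
    rw [List.pairwise_cons] at hp
    have h1 := DCW_mul_t (n := n) (α := α) s j hp.1
    have hW2 := ih hp.2
    rw [DCW_cons, List.length_cons]
    set W := DCW n α s
    set L := s.length
    have hch : (L + 1).choose 2 = L + L.choose 2 := by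
      rw [Nat.choose_succ_succ, Nat.choose_one_right]
    calc (t n α j * W) ^ 2 = t n α j * (W * t n α j) * W := by rw [sq]; simp only [mul_assoc]
      _ = t n α j * (z n α ^ L * (t n α j * W)) * W := by rw [h1]
      _ = (t n α j * z n α ^ L) * (t n α j * (W * W)) := by simp only [mul_assoc]
      _ = (z n α ^ L * t n α j) * (t n α j * (W * W)) := by
          rw [((DC_z_commute (t n α j)).pow_left L).eq]
      _ = z n α ^ L * ((t n α j * t n α j) * (W * W)) := by simp only [mul_assoc]
      _ = z n α ^ L * (z n α ^ α * z n α ^ (α * L + L.choose 2)) := by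
          rw [← sq, ← sq, DC_t_sq, hW2]
      _ = z n α ^ (L + (α + (α * L + L.choose 2))) := by rw [← pow_add, ← pow_add]
      _ = z n α ^ (α * (L + 1) + (L + 1).choose 2) := by rw [hch]; ring_nf

private lemma swap_disjoint {β : Type*} [DecidableEq β] {a b c d : β}
    (h1 : a ≠ c) (h2 : a ≠ d) (h3 : b ≠ c) (h4 : b ≠ d) :
    (Equiv.swap a b).Disjoint (Equiv.swap c d) := by
  intro x
  by_cases ha : x = a
  · subst ha; right; exact Equiv.swap_apply_of_ne_of_ne h1 h2
  by_cases hb : x = b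
  · subst hb; right; exact Equiv.swap_apply_of_ne_of_ne h3 h4
  · left; exact Equiv.swap_apply_of_ne_of_ne ha hb

private lemma prod_swaps_cycleType {β : Type*} [DecidableEq β] [Fintype β]
    (s : List (β × β)) (hne : ∀ p ∈ s, p.1 ≠ p.2)
    (hp : s.Pairwise fun p q => p.1 ≠ q.1 ∧ p.1 ≠ q.2 ∧ p.2 ≠ q.1 ∧ p.2 ≠ q.2) :
    ((s.map fun p => Equiv.swap p.1 p.2).prod).cycleType = Multiset.replicate s.length 2 := by
  induction s with
  | nil => simp
  | cons p s ih =>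
    rw [List.pairwise_cons] at hp
    have hdis : (Equiv.swap p.1 p.2).Disjoint ((s.map fun p => Equiv.swap p.1 p.2).prod) := by
      apply Equiv.Perm.disjoint_prod_right
      intro g hg
      rw [List.mem_map] at hg
      obtain ⟨q, hq, rfl⟩ := hg
      exact swap_disjoint (hp.1 q hq).1 (hp.1 q hq).2.1 (hp.1 q hq).2.2.1 (hp.1 q hq).2.2.2
    have hpne := hne p List.mem_cons_self
    have hc : (Equiv.swap p.1 p.2).cycleType = {2} := by
      rw [(Equiv.Perm.isCycle_swap hpne).cycleType, Equiv.Perm.card_support_swap hpne]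
    rw [List.map_cons, List.prod_cons, Equiv.Perm.Disjoint.cycleType_mul hdis,
      ih (fun q hq => hne q (List.mem_cons_of_mem _ hq)) hp.2, hc, List.length_cons,
      Multiset.replicate_succ, ← Multiset.singleton_add]

private lemma DC_parity (α l : ℕ) (hα : α = 0 ∨ α = 1) (hl : l % 2 = 1) :
    (2 ∣ α * l + l.choose 2) ↔ l % 4 = (if α = 0 then 1 else 3) := by
  obtain ⟨m, rfl⟩ : ∃ m, l = 2 * m + 1 := ⟨l / 2, by omega⟩
  have hc : (2 * m + 1).choose 2 = (2 * m + 1) * m := by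
    rw [Nat.choose_two_right]
    have h1 : (2 * m + 1) * (2 * m + 1 - 1) = (2 * m + 1) * m * 2 := by
      have h0 : 2 * m + 1 - 1 = 2 * m := rfl
      rw [h0]; ring
    rw [h1, Nat.mul_div_cancel _ (by norm_num)]
  obtain ⟨M, hM⟩ : ∃ M, (2 * m + 1) * m = 2 * M + m := ⟨m * m, by ring⟩
  rw [hc, hM]
  rcases hα with rfl | rfl <;> simp <;> omega

private lemma DC_odd_of_ct {m : ℕ} (f : Equiv.Perm (Fin m)) (l : ℕ)
    (hct : f.cycleType = Multiset.replicate l 2) (hodd : Equiv.Perm.sign f = -1) :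
    l % 2 = 1 := by
  rw [Equiv.Perm.sign_of_cycleType, hct, Multiset.sum_replicate, Multiset.card_replicate,
    smul_eq_mul] at hodd
  by_contra h
  have he : Even (l * 2 + l) := Nat.even_iff.mpr (by omega)
  rw [he.neg_one_pow] at hodd
  exact absurd hodd (by decide)

private lemma DC_key (n α : ℕ) (hn : 4 ≤ n)
    (π : Cover n α →* Equiv.Perm (Fin n))
    (hπt : ∀ j : Fin (n - 1), π (t n α j) =
      Equiv.swap (Fin.castLE (Nat.sub_le n 1) j)
        (Fin.castLE (Nat.sub_add_cancel (by omega : 1 ≤ n)).le j.succ))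
    (hπsurj : Function.Surjective π)
    (hπker : π.ker = Subgroup.zpowers (z n α))
    (x : Cover n α) (l : ℕ)
    (hct : (π x).cycleType = Multiset.replicate l 2) :
    x ^ 2 = z n α ^ (α * l + l.choose 2) := by
  -- 2l ≤ n
  have hsum := Equiv.Perm.sum_cycleType (π x)
  rw [hct, Multiset.sum_replicate, smul_eq_mul] at hsum
  have hcard := Finset.card_le_univ (π x).support
  rw [Fintype.card_fin] at hcard
  have hl : 2 * l ≤ n := by omega
  -- canonical indices
  obtain ⟨f, hf⟩ : ∃ f : Fin l → Fin (n-1), ∀ i, (f i : ℕ) = 2 * i :=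
    ⟨fun i => ⟨2 * i, by have := i.isLt; omega⟩, fun i => rfl⟩
  obtain ⟨g, hg1, hg2⟩ : ∃ g : Fin l → Fin n × Fin n,
      (∀ i, ((g i).1 : ℕ) = 2 * i) ∧ (∀ i, ((g i).2 : ℕ) = 2 * i + 1) :=
    ⟨fun i => (⟨2 * i, by have := i.isLt; omega⟩, ⟨2 * i + 1, by have := i.isLt; omega⟩),
      fun i => rfl, fun i => rfl⟩
  set w := DCW n α (List.ofFn f) with hw
  -- square of w
  have hp : (List.ofFn f).Pairwise (fun j k : Fin (n-1) => 1 < Nat.dist (j:ℕ) (k:ℕ)) := by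
    rw [List.pairwise_ofFn]
    intro i j hij
    have : (i : ℕ) < j := hij
    simp only [hf, Nat.dist]
    omega
  have hw2 : w ^ 2 = z n α ^ (α * l + l.choose 2) := by
    have := DCW_sq (n := n) (α := α) (List.ofFn f) hp
    rwa [List.length_ofFn] at this
  -- image of w
  have hπw : π w = ((List.ofFn g).map fun p => Equiv.swap p.1 p.2).prod := by
    rw [hw, DCW, map_list_prod, List.map_map, List.map_ofFn, List.map_ofFn]
    congr 1
    refine congrArg List.ofFn (funext fun i => ?_)
    have h1 : Fin.castLE (Nat.sub_le n 1) (f i) = (g i).1 := by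
      apply Fin.ext; simp [hf i, hg1 i]
    have h2 : Fin.castLE (Nat.sub_add_cancel (by omega : 1 ≤ n)).le (f i).succ = (g i).2 := by
      apply Fin.ext; simp [hf i, hg2 i]
    simp only [Function.comp_apply, hπt, h1, h2]
  have hwct : (π w).cycleType = Multiset.replicate l 2 := by
    rw [hπw, prod_swaps_cycleType, List.length_ofFn]
    · intro p hp'
      rw [List.mem_ofFn] at hp'
      obtain ⟨i, rfl⟩ := hp'
      have := hg1 i; have := hg2 i
      intro hcon
      rw [Fin.ext_iff] at hcon
      omega
    · rw [List.pairwise_ofFn]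
      intro i j hij
      have : (i : ℕ) < j := hij
      have e1 := hg1 i; have e2 := hg2 i; have e3 := hg1 j; have e4 := hg2 j
      refine ⟨?_, ?_, ?_, ?_⟩ <;> intro hcon <;> rw [Fin.ext_iff] at hcon <;> omega
  -- conjugate
  have hconj : IsConj (π w) (π x) := Equiv.Perm.isConj_of_cycleType_eq (hwct.trans hct.symm)
  rw [isConj_iff] at hconj
  obtain ⟨τ, hτ⟩ := hconj
  obtain ⟨g0, rfl⟩ := hπsurj τ
  have hker : x * (g0 * w * g0⁻¹)⁻¹ ∈ π.ker := by
    rw [MonoidHom.mem_ker, map_mul, map_inv, map_mul, map_mul, map_inv, hτ, mul_inv_cancel]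
  rw [hπker, Subgroup.mem_zpowers_iff] at hker
  obtain ⟨k, hk⟩ := hker
  have hx : x = z n α ^ k * (g0 * w * g0⁻¹) := by
    rw [← mul_inv_eq_iff_eq_mul.mp hk.symm]
  have hcom : Commute (z n α ^ k) (g0 * w * g0⁻¹) := (DC_z_commute _).zpow_left k
  have hzk : (z n α ^ k) ^ 2 = 1 := by
    rw [sq, ← zpow_add, ← two_mul, zpow_mul]
    rw [show ((2:ℤ) = ((2:ℕ):ℤ)) from rfl, zpow_natCast, DC_z_sq, one_zpow]
  have hconjpow : (g0 * w * g0⁻¹) ^ 2 = z n α ^ (α * l + l.choose 2) := by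
    rw [conj_pow, hw2]
    have hcz := (DC_z_commute g0).pow_left (α * l + l.choose 2)
    rw [← hcz.eq, mul_inv_cancel_right]
  rw [hx, hcom.mul_pow, hzk, one_mul, hconjpow]

end DCAux

/-- For `n ≥ 4`, `α ∈ {0, 1}` and `G = 2^α.S_n`: an element `x ∈ G`
projecting to an odd permutation is an involution if and only if `π x` is an `l`-fold
transposition (i.e. has cycle type `(2^l, 1^{n-2l})`) with `l ≡ 1 (mod 4)` if `α = 0`
(the cover `2^+.S_n`), respectively `l ≡ 3 (mod 4)` if `α = 1` (the cover `2^-.S_n`). -/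
theorem odd_involution_iff_lfold_transposition
    (n : ℕ) (hn : 4 ≤ n) (α : ℕ) (hα : α = 0 ∨ α = 1)
    (π : DoubleCover.Cover n α →* Equiv.Perm (Fin n))
    (hπt : ∀ j : Fin (n - 1), π (DoubleCover.t n α j) =
      Equiv.swap (Fin.castLE (by omega) j) (Fin.castLE (by omega) j.succ))
    (hπsurj : Function.Surjective π)
    (hπker : π.ker = Subgroup.zpowers (DoubleCover.z n α))
    (hz : orderOf (DoubleCover.z n α) = 2)
    (x : DoubleCover.Cover n α)
    (hodd : Equiv.Perm.sign (π x) = -1) :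
    x ^ 2 = 1 ↔
      ∃ l : ℕ, l % 4 = (if α = 0 then 1 else 3) ∧
        (π x).cycleType = Multiset.replicate l 2 := by
  constructor
  · intro hx2
    have hπx2 : (π x) ^ 2 = 1 := by rw [← map_pow, hx2, map_one]
    have hne : π x ≠ 1 := by
      intro h
      rw [h, map_one] at hodd
      exact absurd hodd (by decide)
    have hdvd : orderOf (π x) ∣ 2 := orderOf_dvd_of_pow_eq_one hπx2
    have ho2 : orderOf (π x) = 2 := by
      have h1 : orderOf (π x) ≠ 1 := by simpa [orderOf_eq_one_iff] using hne
      rcases (Nat.dvd_prime Nat.prime_two).mp hdvd with h | h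
      · exact absurd h h1
      · exact h
    have hall : ∀ c ∈ (π x).cycleType, c = 2 := by
      intro c hc
      have h2 := Multiset.dvd_lcm hc
      rw [Equiv.Perm.lcm_cycleType, ho2] at h2
      have h3 := Equiv.Perm.two_le_of_mem_cycleType hc
      have h4 := Nat.le_of_dvd (by norm_num) h2
      omega
    set l := Multiset.card (π x).cycleType with hldef
    have hct : (π x).cycleType = Multiset.replicate l 2 := Multiset.eq_replicate.mpr ⟨rfl, hall⟩
    refine ⟨l, ?_, hct⟩
    have hlodd := DC_odd_of_ct _ _ hct hodd
    have hk := DC_key n α hn π hπt hπsurj hπker x l hct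
    rw [hx2] at hk
    have h2 : 2 ∣ α * l + l.choose 2 := by
      have h2' := orderOf_dvd_iff_pow_eq_one.mpr hk.symm
      rwa [hz] at h2'
    exact (DC_parity α l hα hlodd).mp h2
  · rintro ⟨l, hl4, hct⟩
    have hlodd : l % 2 = 1 := by
      rcases hα with rfl | rfl <;> simp at hl4 <;> omega
    have hk := DC_key n α hn π hπt hπsurj hπker x l hct
    rw [hk]
    have h2 : 2 ∣ α * l + l.choose 2 := (DC_parity α l hα hlodd).mpr hl4
    refine orderOf_dvd_iff_pow_eq_one.mp ?_
    rw [hz]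
    exact h2
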